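/- The space ℝ^n decomposes as the direct sum of the kernel and the image of F (viewed as a linear map), the restriction F̃ of F to im(F) is a linear automorphism of im(F), and every eigenvalue of −F̃ is real and lies in the interval [δ, η). -/

import Mathlib

/-- The Maxwell–Stefan matrix `F` with entries `F i j = k i j * c i` for `j ≠ i`
and `F i i = -∑_{r ≠ i} k i r * c r`. The number of species is `m + 1` (so the
paper's `n` equals `m + 1`). -/
def MSmatF (m : ℕ) (k : Fin (m + 1) → Fin (m + 1) → ℝ)
    (c : Fin (m + 1) → ℝ) : Matrix (Fin (m + 1)) (Fin (m + 1)) ℝ :=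
  Matrix.of fun i j =>
    if i = j then -(∑ r ∈ Finset.univ.erase i, k i r * c r) else k i j * c i


section MSaux

open Finset


open Finset

variable {n : ℕ} {R : Type*} [CommRing R]

lemma MSaux_sum_erase_eq_ite (i : Fin n) (g : Fin n → R) :
    ∑ j ∈ univ.erase i, g j = ∑ j, if j ≠ i then g j else 0 := by
  rw [← Finset.sum_filter]
  congr 1
  ext j
  simp [Finset.mem_erase]

/-- Swap the roles of the two indices in a sum over off-diagonal pairs. -/
lemma MSaux_sum_erase_swap (f : Fin n → Fin n → R) :
    ∑ i, ∑ j ∈ univ.erase i, f i j = ∑ i, ∑ j ∈ univ.erase i, f j i := by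
  have h1 : ∑ i, ∑ j ∈ univ.erase i, f i j
      = ∑ i, ∑ j, if j ≠ i then f i j else 0 := by
    exact Finset.sum_congr rfl fun i _ => MSaux_sum_erase_eq_ite i _
  have h2 : ∑ i, ∑ j ∈ univ.erase i, f j i
      = ∑ i, ∑ j, if j ≠ i then f j i else 0 := by
    exact Finset.sum_congr rfl fun i _ => MSaux_sum_erase_eq_ite i _
  rw [h1, h2, Finset.sum_comm]
  refine Finset.sum_congr rfl fun i _ => Finset.sum_congr rfl fun j _ => ?_
  by_cases h : i = j <;> simp [h, Ne.symm]

/-- Symmetrization identity for off-diagonal double sums with symmetric weights. -/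
lemma MSaux_sym_pairing (K : Fin n → Fin n → R) (hK : ∀ i j, K i j = K j i)
    (u v : Fin n → R) :
    2 * ∑ i, ∑ j ∈ univ.erase i, K i j * (u i * (v j - v i))
      = -∑ i, ∑ j ∈ univ.erase i, K i j * ((u i - u j) * (v i - v j)) := by
  have hswap : ∑ i, ∑ j ∈ univ.erase i, K i j * (u i * (v j - v i))
      = ∑ i, ∑ j ∈ univ.erase i, K i j * (u j * (v i - v j)) := by
    rw [MSaux_sum_erase_swap (fun i j => K i j * (u i * (v j - v i)))]
    exact Finset.sum_congr rfl fun i _ => Finset.sum_congr rfl fun j _ => by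
      rw [hK j i]
  rw [two_mul]
  nth_rewrite 2 [hswap]
  rw [← Finset.sum_add_distrib, ← neg_eq_iff_eq_neg, ← Finset.sum_neg_distrib]
  refine Finset.sum_congr rfl fun i _ => ?_
  rw [← Finset.sum_add_distrib, ← Finset.sum_neg_distrib]
  exact Finset.sum_congr rfl fun j _ => by ring

/-- Variance identity. -/
lemma MSaux_variance_identity (a : Fin n → R) (u v : Fin n → R) :
    ∑ i, ∑ j ∈ univ.erase i, a i * a j * ((u i - u j) * (v i - v j))
      = 2 * (∑ i, a i) * (∑ i, a i * (u i * v i))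
        - 2 * (∑ i, a i * u i) * (∑ i, a i * v i) := by
  have hfull : ∀ i, ∑ j ∈ univ.erase i, a i * a j * ((u i - u j) * (v i - v j))
      = ∑ j, a i * a j * ((u i - u j) * (v i - v j)) := by
    intro i
    rw [Finset.sum_erase_eq_sub (Finset.mem_univ i)]
    simp
  calc ∑ i, ∑ j ∈ univ.erase i, a i * a j * ((u i - u j) * (v i - v j))
      = ∑ i, ∑ j, a i * a j * ((u i - u j) * (v i - v j)) :=
        Finset.sum_congr rfl fun i _ => hfull i
    _ = ∑ i, ∑ j, (a i * (u i * v i) * a j - a i * u i * (a j * v j)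
          - a i * v i * (a j * u j) + a i * (a j * (u j * v j))) := by
        refine Finset.sum_congr rfl fun i _ => Finset.sum_congr rfl fun j _ => by ring
    _ = 2 * (∑ i, a i) * (∑ i, a i * (u i * v i))
        - 2 * (∑ i, a i * u i) * (∑ i, a i * v i) := by
        simp only [Finset.sum_add_distrib, Finset.sum_sub_distrib,
          ← Finset.sum_mul, ← Finset.mul_sum]
        ring

variable {m : ℕ} (k : Fin (m + 1) → Fin (m + 1) → ℝ) (c : Fin (m + 1) → ℝ)

lemma MS_mulVec (f : ℝ →+* R) (v : Fin (m + 1) → R) (i : Fin (m + 1)) :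
    ((MSmatF m k c).map f).mulVec v i
      = ∑ j ∈ univ.erase i, f (k i j) * (f (c i) * v j - f (c j) * v i) := by
  rw [Matrix.mulVec, dotProduct]
  rw [← Finset.add_sum_erase _ _ (Finset.mem_univ i)]
  have hd : (MSmatF m k c).map f i i * v i
      = -∑ r ∈ univ.erase i, f (k i r) * (f (c r) * v i) := by
    simp only [Matrix.map_apply, MSmatF, Matrix.of_apply, if_pos rfl, if_true]
    rw [map_neg, map_sum]
    simp only [map_mul]
    rw [neg_mul, Finset.sum_mul]
    congr 1
    exact Finset.sum_congr rfl fun r _ => by ring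
  have ho : ∀ j ∈ univ.erase i, (MSmatF m k c).map f i j * v j
      = f (k i j) * (f (c i) * v j) := by
    intro j hj
    have hij : i ≠ j := fun h => (Finset.mem_erase.mp hj).1 h.symm
    simp only [Matrix.map_apply, MSmatF, Matrix.of_apply, if_neg hij, map_mul]
    ring
  rw [hd, Finset.sum_congr rfl ho, neg_add_eq_sub, ← Finset.sum_sub_distrib]
  exact Finset.sum_congr rfl fun j _ => by ring

lemma MS_colsum (hsymm : ∀ i j, k i j = k j i) (f : ℝ →+* R) (v : Fin (m + 1) → R) :
    ∑ i, ((MSmatF m k c).map f).mulVec v i = 0 := by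
  simp only [MS_mulVec k c f v]
  have h : ∑ i, ∑ j ∈ univ.erase i, f (k i j) * (f (c i) * v j)
      = ∑ i, ∑ j ∈ univ.erase i, f (k i j) * (f (c j) * v i) := by
    rw [MSaux_sum_erase_swap (fun i j => f (k i j) * (f (c i) * v j))]
    exact Finset.sum_congr rfl fun i _ => Finset.sum_congr rfl fun j _ => by
      rw [hsymm j i]
  simp only [mul_sub, Finset.sum_sub_distrib]
  rw [h, sub_self]

/-- Main pairing identity: for `x = D y` (where `D = diag c`),
`2 ∑ u i * (F x) i = -∑∑ k c c (u i - u j)(y i - y j)`. -/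
lemma MS_pairing (hsymm : ∀ i j, k i j = k j i) (f : ℝ →+* R)
    (u y : Fin (m + 1) → R) :
    2 * ∑ i, u i * ((MSmatF m k c).map f).mulVec (fun i => f (c i) * y i) i
      = -∑ i, ∑ j ∈ univ.erase i, f (k i j * (c i * c j)) *
          ((u i - u j) * (y i - y j)) := by
  have h1 : ∀ i, u i * ((MSmatF m k c).map f).mulVec (fun i => f (c i) * y i) i
      = ∑ j ∈ univ.erase i, (f (k i j * (c i * c j))) * (u i * (y j - y i)) := by
    intro i
    rw [MS_mulVec, Finset.mul_sum]
    exact Finset.sum_congr rfl fun j _ => by simp only [map_mul]; ring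
  simp only [h1]
  exact MSaux_sym_pairing _ (fun i j => by rw [hsymm i j]; ring_nf) u y

lemma MS_mulVec_real (v : Fin (m + 1) → ℝ) (i : Fin (m + 1)) :
    (MSmatF m k c).mulVec v i
      = ∑ j ∈ univ.erase i, k i j * (c i * v j - c j * v i) := by
  have := MS_mulVec k c (RingHom.id ℝ) v i
  simpa using this

lemma MS_pairing_real (hsymm : ∀ i j, k i j = k j i) (u y : Fin (m + 1) → ℝ) :
    2 * ∑ i, u i * (MSmatF m k c).mulVec (fun i => c i * y i) i
      = -∑ i, ∑ j ∈ univ.erase i, k i j * (c i * c j) *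
          ((u i - u j) * (y i - y j)) := by
  have := MS_pairing k c hsymm (RingHom.id ℝ) u y
  simpa using this

section Kernel

variable (hsymm : ∀ i j, k i j = k j i)
  (hkpos : ∀ i j, i ≠ j → 0 < k i j)
  (hc : ∀ i, 0 ≤ c i) (hcpos : 0 < ∑ i, c i)

include hc hcpos in
lemma MSaux_exists_pos : ∃ i, 0 < c i := by
  by_contra h
  push_neg at h
  have : ∑ i, c i ≤ 0 := Finset.sum_nonpos fun i _ => h i
  linarith

include hkpos hc hcpos in
lemma MS_zero_of_czero (x : Fin (m + 1) → ℝ) (hx : (MSmatF m k c).mulVec x = 0)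
    (i : Fin (m + 1)) (hci : c i = 0) : x i = 0 := by
  have hrow := MS_mulVec_real k c x i
  rw [congrFun hx i, hci] at hrow
  simp only [zero_mul, zero_sub, mul_neg] at hrow
  have hsum : (∑ j ∈ univ.erase i, k i j * c j) * x i = 0 := by
    have h0 : (0 : Fin (m+1) → ℝ) i = 0 := rfl
    rw [h0] at hrow
    have h1 : ∑ j ∈ univ.erase i, -(k i j * (c j * x i))
        = -((∑ j ∈ univ.erase i, k i j * c j) * x i) := by
      rw [Finset.sum_mul, ← Finset.sum_neg_distrib]
      exact Finset.sum_congr rfl fun j _ => by ring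
    rw [h1] at hrow
    linarith
  obtain ⟨r, hr⟩ := MSaux_exists_pos c hc hcpos
  have hri : r ≠ i := fun h => by rw [h, hci] at hr; exact lt_irrefl 0 hr
  have hd : 0 < ∑ j ∈ univ.erase i, k i j * c j := by
    refine Finset.sum_pos' (fun j hj => ?_) ⟨r, Finset.mem_erase.mpr ⟨hri, Finset.mem_univ r⟩, ?_⟩
    · exact mul_nonneg (le_of_lt (hkpos i j (Finset.mem_erase.mp hj).1.symm)) (hc j)
    · exact mul_pos (hkpos i r (Ne.symm hri)) hr
  exact (mul_eq_zero.mp hsum).resolve_left (ne_of_gt hd)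

include hsymm hkpos hc hcpos in
lemma MS_ker (x : Fin (m + 1) → ℝ) (hx : (MSmatF m k c).mulVec x = 0) :
    ∃ t : ℝ, x = t • c := by
  classical
  set y : Fin (m + 1) → ℝ := fun i => if c i = 0 then 0 else x i / c i with hy
  have hxy : ∀ i, c i * y i = x i := by
    intro i
    by_cases h : c i = 0
    · rw [h, zero_mul]
      exact (MS_zero_of_czero k c hkpos hc hcpos x hx i h).symm
    · simp only [hy, if_neg h]
      field_simp
  have hpair := MS_pairing_real k c hsymm y y
  have hx' : (fun i => c i * y i) = x := funext hxy
  rw [hx', hx] at hpair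
  simp only [Pi.zero_apply, mul_zero, Finset.sum_const_zero] at hpair
  have hterms : ∀ i ∈ (univ : Finset (Fin (m+1))), ∀ j ∈ univ.erase i,
      k i j * (c i * c j) * ((y i - y j) * (y i - y j)) = 0 := by
    have hnn : ∀ i ∈ (univ : Finset (Fin (m+1))),
        0 ≤ ∑ j ∈ univ.erase i, k i j * (c i * c j) * ((y i - y j) * (y i - y j)) := by
      intro i _
      refine Finset.sum_nonneg fun j hj => ?_
      have := hkpos i j (Finset.mem_erase.mp hj).1.symm
      exact mul_nonneg (mul_nonneg this.le (mul_nonneg (hc i) (hc j))) (mul_self_nonneg _)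
    have hnn2 : ∀ i ∈ (univ : Finset (Fin (m+1))), ∀ j ∈ univ.erase i,
        (0:ℝ) ≤ k i j * (c i * c j) * ((y i - y j) * (y i - y j)) := by
      intro i _ j hj
      have := hkpos i j (Finset.mem_erase.mp hj).1.symm
      exact mul_nonneg (mul_nonneg this.le (mul_nonneg (hc i) (hc j))) (mul_self_nonneg _)
    have hzero : ∑ i, ∑ j ∈ univ.erase i, k i j * (c i * c j) *
        ((y i - y j) * (y i - y j)) = 0 := by linarith
    intro i hi j hj
    have h1 := (Finset.sum_eq_zero_iff_of_nonneg hnn).mp hzero i hi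
    exact (Finset.sum_eq_zero_iff_of_nonneg (hnn2 i hi)).mp h1 j hj
  obtain ⟨i₀, hi₀⟩ := MSaux_exists_pos c hc hcpos
  refine ⟨y i₀, funext fun i => ?_⟩
  by_cases h : c i = 0
  · simp [Pi.smul_apply, h, MS_zero_of_czero k c hkpos hc hcpos x hx i h]
  · by_cases hii : i = i₀
    · subst hii
      simp [Pi.smul_apply, ← hxy i, mul_comm]
    · have := hterms i (Finset.mem_univ i)
        i₀ (Finset.mem_erase.mpr ⟨fun h' => hii h'.symm, Finset.mem_univ i₀⟩)
      have hk := hkpos i i₀ hii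
      have hcip : 0 < c i := lt_of_le_of_ne (hc i) (Ne.symm h)
      have hyy : y i = y i₀ := by
        have hne : k i i₀ * (c i * c i₀) ≠ 0 := by positivity
        have := mul_eq_zero.mp this
        rcases this with h' | h'
        · exact absurd h' hne
        · nlinarith [sq_nonneg (y i - y i₀)]
      rw [Pi.smul_apply, smul_eq_mul, ← hxy i, hyy]
      ring
end Kernel

lemma MS_colsum_real (hsymm : ∀ i j, k i j = k j i) (v : Fin (m + 1) → ℝ) :
    ∑ i, (MSmatF m k c).mulVec v i = 0 := by
  have := MS_colsum k c hsymm (RingHom.id ℝ) v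
  simpa using this

section Parts12

variable (hsymm : ∀ i j, k i j = k j i)
  (hkpos : ∀ i j, i ≠ j → 0 < k i j)
  (hc : ∀ i, 0 ≤ c i) (hcpos : 0 < ∑ i, c i)

include hsymm hkpos hc hcpos in
lemma MS_disjoint :
    Disjoint (LinearMap.ker (Matrix.toLin' (MSmatF m k c)))
      (LinearMap.range (Matrix.toLin' (MSmatF m k c))) := by
  rw [Submodule.disjoint_def]
  intro x hker hrange
  rw [LinearMap.mem_ker, Matrix.toLin'_apply] at hker
  obtain ⟨t, ht⟩ := MS_ker k c hsymm hkpos hc hcpos x hker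
  obtain ⟨w, hw⟩ := LinearMap.mem_range.mp hrange
  have hsum : ∑ i, x i = 0 := by
    rw [← hw]
    simpa only [Matrix.toLin'_apply] using MS_colsum_real k c hsymm w
  rw [ht] at hsum ⊢
  simp only [Pi.smul_apply, smul_eq_mul, ← Finset.mul_sum] at hsum
  rcases mul_eq_zero.mp hsum with h | h
  · rw [h, zero_smul]
  · exact absurd h (ne_of_gt hcpos)

include hsymm hkpos hc hcpos in
lemma MS_isCompl :
    IsCompl (LinearMap.ker (Matrix.toLin' (MSmatF m k c)))
      (LinearMap.range (Matrix.toLin' (MSmatF m k c))) := by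
  set f := Matrix.toLin' (MSmatF m k c)
  have hdisj := MS_disjoint k c hsymm hkpos hc hcpos
  refine ⟨hdisj, codisjoint_iff.mpr ?_⟩
  apply Submodule.eq_top_of_finrank_eq
  have h1 := Submodule.finrank_sup_add_finrank_inf_eq
    (LinearMap.ker f) (LinearMap.range f)
  rw [disjoint_iff.mp hdisj] at h1
  simp only [finrank_bot, add_zero] at h1
  rw [h1, add_comm]
  exact LinearMap.finrank_range_add_finrank_ker f

include hsymm hkpos hc hcpos in
lemma MS_bijective :
    Function.Bijective
      ((Matrix.toLin' (MSmatF m k c)).restrict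
        (p := LinearMap.range (Matrix.toLin' (MSmatF m k c)))
        (q := LinearMap.range (Matrix.toLin' (MSmatF m k c)))
        (fun x _ => LinearMap.mem_range_self _ x)) := by
  set f := Matrix.toLin' (MSmatF m k c)
  have hinj : Function.Injective (f.restrict
      (p := LinearMap.range f) (q := LinearMap.range f)
      (fun x _ => LinearMap.mem_range_self _ x)) := by
    rw [injective_iff_map_eq_zero]
    intro u hu
    have hval : f u.val = 0 := by
      have := congrArg Subtype.val hu
      simpa [LinearMap.restrict_apply] using this
    have hmem : u.val ∈ LinearMap.ker f ⊓ LinearMap.range f :=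
      ⟨LinearMap.mem_ker.mpr hval, u.2⟩
    rw [disjoint_iff.mp (MS_disjoint k c hsymm hkpos hc hcpos)] at hmem
    exact Subtype.ext (by simpa using hmem)
  exact ⟨hinj, (LinearMap.injective_iff_surjective).mp hinj⟩

end Parts12

section Bounds

variable {k c} {m : ℕ} -- dummy

lemma MSaux_normSq_sub_le1 (a b : ℂ) :
    Complex.normSq (a - b) ≤ 2 * Complex.normSq a + 2 * Complex.normSq b := by
  have h : Complex.normSq (a - b) + Complex.normSq (a + b)
      = 2 * Complex.normSq a + 2 * Complex.normSq b := by
    simp [Complex.normSq_apply]; ring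
  linarith [Complex.normSq_nonneg (a + b)]

end Bounds

section RealBounds

variable (hm : 1 ≤ m) (hsymm : ∀ i j, k i j = k j i)
  (hkpos : ∀ i j, i ≠ j → 0 < k i j)
  (hc : ∀ i, 0 ≤ c i)
  (cmin cmax : ℝ) (hcmin : 0 < cmin)
  (hmin : cmin ≤ ∑ i, c i) (hmax : ∑ i, c i ≤ cmax)
  (δ₀ : ℝ)
  (hδ₀ : IsLeast {x : ℝ | ∃ i j : Fin (m + 1), i ≠ j ∧ k i j = x} δ₀)

include hkpos hδ₀ in
lemma MSaux_delta0_pos : 0 < δ₀ := by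
  obtain ⟨⟨a, b, hab, hk⟩, _⟩ := hδ₀
  exact hk ▸ hkpos a b hab

include hδ₀ in
lemma MSaux_delta0_le : ∀ i j, i ≠ j → δ₀ ≤ k i j := fun i j h => hδ₀.2 ⟨i, j, h, rfl⟩

include hm hkpos in
lemma MSaux_Kcol_lt (i : Fin (m + 1)) :
    ∑ j ∈ univ.erase i, k i j < ∑ p, ∑ q ∈ univ.erase p, k p q := by
  have hnt : Nontrivial (Fin (m + 1)) := Fin.nontrivial_iff_two_le.mpr (by omega)
  obtain ⟨i', hi'⟩ := exists_ne i
  have hKnn : ∀ p : Fin (m+1), 0 ≤ ∑ q ∈ univ.erase p, k p q := by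
    intro p
    exact Finset.sum_nonneg fun q hq =>
      (hkpos p q (Finset.mem_erase.mp hq).1.symm).le
  have hKi' : 0 < ∑ q ∈ univ.erase i', k i' q := by
    obtain ⟨q, hq⟩ := exists_ne i'
    refine Finset.sum_pos' (fun q hq => (hkpos i' q (Finset.mem_erase.mp hq).1.symm).le)
      ⟨q, Finset.mem_erase.mpr ⟨hq, Finset.mem_univ q⟩, hkpos i' q (Ne.symm hq)⟩
  have hsplit : ∑ p, ∑ q ∈ univ.erase p, k p q
      = (∑ q ∈ univ.erase i, k i q) + ∑ p ∈ univ.erase i, ∑ q ∈ univ.erase p, k p q :=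
    (Finset.add_sum_erase _ _ (Finset.mem_univ i)).symm
  have hrest : 0 < ∑ p ∈ univ.erase i, ∑ q ∈ univ.erase p, k p q := by
    refine Finset.sum_pos' (fun p _ => hKnn p)
      ⟨i', Finset.mem_erase.mpr ⟨hi', Finset.mem_univ i'⟩, hKi'⟩
  linarith

include hc hmax hcmin hmin in
lemma MSaux_c_le_cmax (j : Fin (m + 1)) : c j ≤ cmax := by
  have := Finset.single_le_sum (f := c) (fun i _ => hc i) (Finset.mem_univ j)
  linarith

include hm hkpos hc hcmin hmin hmax in
lemma MSaux_d_lt_eta (i : Fin (m + 1)) :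
    ∑ j ∈ univ.erase i, k i j * c j
      < cmax * ∑ p, ∑ q ∈ univ.erase p, k p q := by
  have hcmax : 0 < cmax := lt_of_lt_of_le hcmin (le_trans hmin hmax)
  have h1 : ∑ j ∈ univ.erase i, k i j * c j ≤ cmax * ∑ j ∈ univ.erase i, k i j := by
    rw [Finset.mul_sum]
    refine Finset.sum_le_sum fun j hj => ?_
    have hk := hkpos i j (Finset.mem_erase.mp hj).1.symm
    have := MSaux_c_le_cmax c hc cmin cmax hcmin hmin hmax j
    nlinarith
  have h2 := MSaux_Kcol_lt k hm hkpos i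
  nlinarith

include hkpos hc hcmin hmin hδ₀ in
lemma MSaux_d_ge_delta (i : Fin (m + 1)) (hci : c i = 0) :
    cmin * δ₀ ≤ ∑ j ∈ univ.erase i, k i j * c j := by
  have h1 : ∑ j ∈ univ.erase i, δ₀ * c j ≤ ∑ j ∈ univ.erase i, k i j * c j := by
    refine Finset.sum_le_sum fun j hj => ?_
    have := MSaux_delta0_le k δ₀ hδ₀ i j (Finset.mem_erase.mp hj).1.symm
    have := hc j
    nlinarith
  have h2 : ∑ j ∈ univ.erase i, c j = ∑ j, c j - c i :=
    Finset.sum_erase_eq_sub (Finset.mem_univ i)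
  have h3 := MSaux_delta0_pos k hkpos δ₀ hδ₀
  rw [← Finset.mul_sum, h2, hci, sub_zero] at h1
  nlinarith

end RealBounds

lemma MSaux_conj_sub_mul (a b : ℂ) :
    ((starRingEnd ℂ) a - (starRingEnd ℂ) b) * (a - b)
      = ((Complex.normSq (a - b) : ℝ) : ℂ) := by
  rw [← map_sub, mul_comm, Complex.mul_conj]

section Spectral

open Complex

variable (hm : 1 ≤ m) (hsymm : ∀ i j, k i j = k j i)
  (hkpos : ∀ i j, i ≠ j → 0 < k i j)
  (hc : ∀ i, 0 ≤ c i)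
  (cmin cmax : ℝ) (hcmin : 0 < cmin)
  (hmin : cmin ≤ ∑ i, c i) (hmax : ∑ i, c i ≤ cmax)
  (δ₀ : ℝ)
  (hδ₀ : IsLeast {x : ℝ | ∃ i j : Fin (m + 1), i ≠ j ∧ k i j = x} δ₀)

include hm hsymm hkpos hc hcmin hmin hmax hδ₀ in
lemma MS_spec (μ : ℂ) (x : Fin (m + 1) → ℂ) (hx0 : x ≠ 0)
    (hsum : ∑ i, x i = 0)
    (heig : ((MSmatF m k c).map Complex.ofRealHom).mulVec x = -(μ • x)) :
    μ.im = 0 ∧ cmin * δ₀ ≤ μ.re ∧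
      μ.re < 2 * cmax * ∑ p, ∑ q ∈ univ.erase p, k p q := by
  classical
  have hKtotpos : 0 < ∑ p, ∑ q ∈ univ.erase p, k p q := by
    have h := MSaux_Kcol_lt k hm hkpos 0
    have h0 : 0 ≤ ∑ j ∈ univ.erase 0, k 0 j :=
      Finset.sum_nonneg fun j hj => (hkpos 0 j (Finset.mem_erase.mp hj).1.symm).le
    linarith
  have hcmax : 0 < cmax := lt_of_lt_of_le hcmin (le_trans hmin hmax)
  by_cases hz : ∃ i, c i = 0 ∧ x i ≠ 0
  · -- Case A: eigenvalue comes from a zero-concentration row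
    obtain ⟨i, hci, hxi⟩ := hz
    set d : ℝ := ∑ j ∈ univ.erase i, k i j * c j with hd
    have hrow := MS_mulVec k c Complex.ofRealHom x i
    have hrow2 : ((MSmatF m k c).map ⇑Complex.ofRealHom).mulVec x i = -(μ * x i) := by
      rw [heig]; simp
    have hterm : ∀ j ∈ univ.erase i,
        (Complex.ofRealHom (k i j)) * (Complex.ofRealHom (c i) * x j
          - Complex.ofRealHom (c j) * x i)
        = -(((k i j * c j : ℝ) : ℂ) * x i) := by
      intro j _
      have : Complex.ofRealHom (c i) = (0 : ℂ) := by
        simp [hci]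
      rw [this]
      simp only [Complex.ofRealHom_eq_coe]
      push_cast
      ring
    rw [Finset.sum_congr rfl hterm] at hrow
    have hsum' : ∑ j ∈ univ.erase i, -(((k i j * c j : ℝ) : ℂ) * x i)
        = -((d : ℂ) * x i) := by
      rw [Finset.sum_neg_distrib, ← Finset.sum_mul, hd]
      push_cast
      ring
    rw [hsum', hrow2] at hrow
    have hμd : μ = (d : ℂ) := by
      have h1 : ((d : ℂ) - μ) * x i = 0 := by
        linear_combination hrow
      rcases mul_eq_zero.mp h1 with h | h
      · exact (sub_eq_zero.mp h).symm
      · exact absurd h hxi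
    subst hμd
    refine ⟨by simp, ?_, ?_⟩
    · simp only [Complex.ofReal_re]
      rw [hd]
      exact MSaux_d_ge_delta k c hkpos hc cmin hcmin hmin δ₀ hδ₀ i hci
    · have h1 := MSaux_d_lt_eta k c hm hkpos hc cmin cmax hcmin hmin hmax i
      simp only [Complex.ofReal_re]
      rw [hd]
      nlinarith
  · -- Case B: x vanishes on zero-concentration coordinates
    push_neg at hz
    set y : Fin (m + 1) → ℂ := fun i => if c i = 0 then 0 else x i / ((c i : ℝ) : ℂ) with hy
    have hxy : ∀ i, ((c i : ℝ) : ℂ) * y i = x i := by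
      intro i
      by_cases h : c i = 0
      · simp [hy, h, hz i h]
      · have hne : ((c i : ℝ) : ℂ) ≠ 0 := Complex.ofReal_ne_zero.mpr h
        rw [hy]
        simp only [if_neg h]
        field_simp
    set S₂ : ℝ := ∑ i, c i * Complex.normSq (y i) with hS2
    set R : ℝ := ∑ i, ∑ j ∈ univ.erase i,
      k i j * (c i * c j) * Complex.normSq (y i - y j) with hR
    have hS2nn : ∀ i, 0 ≤ c i * Complex.normSq (y i) :=
      fun i => mul_nonneg (hc i) (Complex.normSq_nonneg _)
    obtain ⟨i₀, hxi₀⟩ : ∃ i, x i ≠ 0 := by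
      by_contra h; push_neg at h; exact hx0 (funext h)
    have hci₀ : c i₀ ≠ 0 := fun h => hxi₀ (hz i₀ h)
    have hyi₀ : y i₀ ≠ 0 := by
      intro h
      exact hxi₀ (by rw [← hxy i₀, h, mul_zero])
    have hti₀ : 0 < c i₀ * Complex.normSq (y i₀) :=
      mul_pos (lt_of_le_of_ne (hc i₀) (Ne.symm hci₀)) (Complex.normSq_pos.mpr hyi₀)
    have hS2pos : 0 < S₂ := by
      rw [hS2]
      exact Finset.sum_pos' (fun i _ => hS2nn i) ⟨i₀, Finset.mem_univ i₀, hti₀⟩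
    -- the pairing identity
    have hpair := MS_pairing k c hsymm Complex.ofRealHom
      (fun i => (starRingEnd ℂ) (y i)) y
    have hxfun : (fun i => Complex.ofRealHom (c i) * y i) = x := funext fun i => by
      simpa using hxy i
    rw [hxfun, heig] at hpair
    beta_reduce at hpair
    have hL : ∑ i, (starRingEnd ℂ) (y i) * (-(μ • x)) i = -(μ * ((S₂ : ℝ) : ℂ)) := by
      have hterm : ∀ i, (starRingEnd ℂ) (y i) * (-(μ • x)) i
          = -(μ * ((c i * Complex.normSq (y i) : ℝ) : ℂ)) := by
        intro i
        have hconj : (starRingEnd ℂ) (y i) * y i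
            = ((Complex.normSq (y i) : ℝ) : ℂ) := by
          rw [mul_comm, Complex.mul_conj]
        have hx' := hxy i
        simp only [Pi.neg_apply, Pi.smul_apply, smul_eq_mul]
        push_cast
        linear_combination μ * (starRingEnd ℂ) (y i) * hx' - μ * ((c i : ℝ) : ℂ) * hconj
      rw [Finset.sum_congr rfl (fun i _ => hterm i), Finset.sum_neg_distrib,
        ← Finset.mul_sum]
      have : ∑ i, ((c i * Complex.normSq (y i) : ℝ) : ℂ) = ((S₂ : ℝ) : ℂ) := by
        rw [hS2]; push_cast; ring
      rw [this]
    have hRhs : ∑ i, ∑ j ∈ univ.erase i, Complex.ofRealHom (k i j * (c i * c j)) *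
        (((starRingEnd ℂ) (y i) - (starRingEnd ℂ) (y j)) * (y i - y j))
        = ((R : ℝ) : ℂ) := by
      have hterm : ∀ i, ∀ j ∈ univ.erase i,
          Complex.ofRealHom (k i j * (c i * c j)) *
            (((starRingEnd ℂ) (y i) - (starRingEnd ℂ) (y j)) * (y i - y j))
          = ((k i j * (c i * c j) * Complex.normSq (y i - y j) : ℝ) : ℂ) := by
        intro i j _
        rw [MSaux_conj_sub_mul]
        simp only [Complex.ofRealHom_eq_coe]
        push_cast
        ring
      rw [Finset.sum_congr rfl (fun i _ => Finset.sum_congr rfl (hterm i))]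
      rw [hR]
      push_cast
      ring
    rw [hL, hRhs] at hpair
    -- μ is real
    have hμ : μ = ((R / (2 * S₂) : ℝ) : ℂ) := by
      have hS2ne : ((S₂ : ℝ) : ℂ) ≠ 0 := Complex.ofReal_ne_zero.mpr hS2pos.ne'
      rw [Complex.ofReal_div]
      push_cast
      rw [eq_div_iff (by exact mul_ne_zero two_ne_zero hS2ne)]
      linear_combination -hpair
    have hμre : μ.re = R / (2 * S₂) := by rw [hμ]; exact Complex.ofReal_re _
    refine ⟨by rw [hμ]; exact Complex.ofReal_im _, ?_, ?_⟩
    · -- lower bound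
      set V : ℝ := ∑ i, ∑ j ∈ univ.erase i,
        c i * c j * Complex.normSq (y i - y j) with hV
      have hRV : δ₀ * V ≤ R := by
        rw [hR, hV, Finset.mul_sum]
        refine Finset.sum_le_sum fun i _ => ?_
        rw [Finset.mul_sum]
        refine Finset.sum_le_sum fun j hj => ?_
        have hk := MSaux_delta0_le k δ₀ hδ₀ i j (Finset.mem_erase.mp hj).1.symm
        have h1 := hc i; have h2 := hc j
        have h3 := Complex.normSq_nonneg (y i - y j)
        nlinarith [mul_nonneg (mul_nonneg (mul_nonneg (sub_nonneg.mpr hk) h1) h2) h3]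
      have hsum0 : ∑ i, ((c i : ℝ) : ℂ) * y i = 0 := by
        rw [Finset.sum_congr rfl (fun i _ => hxy i)]; exact hsum
      have hsumconj : ∑ i, ((c i : ℝ) : ℂ) * (starRingEnd ℂ) (y i) = 0 := by
        have h : ∀ i, ((c i : ℝ) : ℂ) * (starRingEnd ℂ) (y i)
            = (starRingEnd ℂ) (((c i : ℝ) : ℂ) * y i) := by
          intro i; rw [map_mul, Complex.conj_ofReal]
        rw [Finset.sum_congr rfl (fun i _ => h i), ← map_sum, hsum0, map_zero]
      have hS2c : ∑ i, ((c i : ℝ) : ℂ) * ((starRingEnd ℂ) (y i) * y i)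
          = ((S₂ : ℝ) : ℂ) := by
        have h : ∀ i, ((c i : ℝ) : ℂ) * ((starRingEnd ℂ) (y i) * y i)
            = ((c i * Complex.normSq (y i) : ℝ) : ℂ) := by
          intro i
          rw [mul_comm ((starRingEnd ℂ) (y i)), Complex.mul_conj]
          push_cast; ring
        rw [Finset.sum_congr rfl (fun i _ => h i), hS2]
        push_cast; ring
      have hvar := MSaux_variance_identity (fun i => ((c i : ℝ) : ℂ))
        (fun i => (starRingEnd ℂ) (y i)) y
      beta_reduce at hvar
      have hVl : ∑ i, ∑ j ∈ univ.erase i, ((c i : ℝ) : ℂ) * ((c j : ℝ) : ℂ) *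
          (((starRingEnd ℂ) (y i) - (starRingEnd ℂ) (y j)) * (y i - y j))
          = ((V : ℝ) : ℂ) := by
        have hterm : ∀ i, ∀ j ∈ univ.erase i, ((c i : ℝ) : ℂ) * ((c j : ℝ) : ℂ) *
            (((starRingEnd ℂ) (y i) - (starRingEnd ℂ) (y j)) * (y i - y j))
            = ((c i * c j * Complex.normSq (y i - y j) : ℝ) : ℂ) := by
          intro i j _
          rw [MSaux_conj_sub_mul]
          push_cast; ring
        rw [Finset.sum_congr rfl (fun i _ => Finset.sum_congr rfl (hterm i))]
        rw [hV]; push_cast; ring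
      rw [hVl, hS2c, hsum0, hsumconj] at hvar
      have hcsum : ∑ i, ((c i : ℝ) : ℂ) = (((∑ i, c i : ℝ)) : ℂ) := by push_cast; ring
      rw [hcsum] at hvar
      have hVval : V = 2 * (∑ i, c i) * S₂ := by
        have := hvar
        simp only [mul_zero, zero_mul, sub_zero] at this
        exact_mod_cast this
      rw [hμre, le_div_iff₀ (by positivity)]
      have hδ₀pos := MSaux_delta0_pos k hkpos δ₀ hδ₀
      nlinarith [mul_nonneg (mul_nonneg hδ₀pos.le (sub_nonneg.mpr hmin)) hS2pos.le]
    · -- upper bound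
      set A : ℝ := ∑ i, c i * Complex.normSq (y i) * ∑ j ∈ univ.erase i, k i j * c j
        with hA
      have h1 : R ≤ ∑ i, ∑ j ∈ univ.erase i, k i j * (c i * c j) *
          (2 * Complex.normSq (y i) + 2 * Complex.normSq (y j)) := by
        rw [hR]
        refine Finset.sum_le_sum fun i _ => Finset.sum_le_sum fun j hj => ?_
        have hk := hkpos i j (Finset.mem_erase.mp hj).1.symm
        have h2 := MSaux_normSq_sub_le1 (y i) (y j)
        have h3 := hc i; have h4 := hc j
        exact mul_le_mul_of_nonneg_left h2 (mul_nonneg hk.le (mul_nonneg h3 h4))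
      have h2 : ∑ i, ∑ j ∈ univ.erase i, k i j * (c i * c j) *
          (2 * Complex.normSq (y i) + 2 * Complex.normSq (y j)) = 4 * A := by
        have e1 : ∑ i, ∑ j ∈ univ.erase i, k i j * (c i * c j) *
            (2 * Complex.normSq (y i) + 2 * Complex.normSq (y j))
            = (∑ i, ∑ j ∈ univ.erase i, 2 * (k i j * (c i * c j) * Complex.normSq (y i)))
              + ∑ i, ∑ j ∈ univ.erase i, 2 * (k i j * (c i * c j) * Complex.normSq (y j)) := by
          rw [← Finset.sum_add_distrib]
          refine Finset.sum_congr rfl fun i _ => ?_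
          rw [← Finset.sum_add_distrib]
          exact Finset.sum_congr rfl fun j _ => by ring
        have e2 : ∑ i, ∑ j ∈ univ.erase i, 2 * (k i j * (c i * c j) * Complex.normSq (y j))
            = ∑ i, ∑ j ∈ univ.erase i, 2 * (k i j * (c i * c j) * Complex.normSq (y i)) := by
          rw [MSaux_sum_erase_swap (fun i j => 2 * (k i j * (c i * c j) * Complex.normSq (y j)))]
          exact Finset.sum_congr rfl fun i _ => Finset.sum_congr rfl fun j _ => by
            rw [hsymm j i]; ring
        have e3 : ∑ i, ∑ j ∈ univ.erase i, 2 * (k i j * (c i * c j) * Complex.normSq (y i))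
            = 2 * A := by
          rw [hA]
          simp only [Finset.mul_sum]
          exact Finset.sum_congr rfl fun i _ => Finset.sum_congr rfl fun j _ => by ring
        rw [e1, e2, e3]; ring
      have hAE : A < (cmax * ∑ p, ∑ q ∈ univ.erase p, k p q) * S₂ := by
        have hrw : (cmax * ∑ p, ∑ q ∈ univ.erase p, k p q) * S₂
            = ∑ i, c i * Complex.normSq (y i) *
                (cmax * ∑ p, ∑ q ∈ univ.erase p, k p q) := by
          rw [hS2, Finset.mul_sum]
          exact Finset.sum_congr rfl fun i _ => by ring
        rw [hA, hrw]
        refine Finset.sum_lt_sum (fun i _ => ?_) ⟨i₀, Finset.mem_univ i₀, ?_⟩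
        · have hd := MSaux_d_lt_eta k c hm hkpos hc cmin cmax hcmin hmin hmax i
          have := hS2nn i
          nlinarith
        · have hd := MSaux_d_lt_eta k c hm hkpos hc cmin cmax hcmin hmin hmax i₀
          nlinarith
      rw [hμre, div_lt_iff₀ (by positivity)]
      nlinarith

end Spectral

end MSaux

/-- `ℝⁿ = ker F ⊕ im F`, the restriction `F̃` of `F` to `im F` is a
linear automorphism of `im F`, and every (complex) eigenvalue of the restriction of
`-F` to its image (the complexification of `-F̃`) is real and lies in `[δ, η)`. -/
theorem ker_range_compl_and_spectrum_restriction
    (m : ℕ) (hm : 1 ≤ m)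
    (k : Fin (m + 1) → Fin (m + 1) → ℝ)
    (hsymm : ∀ i j, k i j = k j i)
    (hkpos : ∀ i j, i ≠ j → 0 < k i j)
    (c : Fin (m + 1) → ℝ)
    (hc : ∀ i, 0 ≤ c i)
    (cmin cmax : ℝ)
    (hcmin : 0 < cmin)
    (hmin : cmin ≤ ∑ i, c i)
    (hmax : ∑ i, c i ≤ cmax)
    (δ₀ : ℝ)
    (hδ₀ : IsLeast {x : ℝ | ∃ i j : Fin (m + 1), i ≠ j ∧ k i j = x} δ₀)
    (δ η : ℝ)
    (hδ : δ = cmin * δ₀)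
    (hη : η = 2 * cmax * ∑ i : Fin (m + 1), ∑ j ∈ Finset.univ.erase i, k i j) :
    IsCompl (LinearMap.ker (Matrix.toLin' (MSmatF m k c)))
        (LinearMap.range (Matrix.toLin' (MSmatF m k c)))
      ∧
    Function.Bijective
      ((Matrix.toLin' (MSmatF m k c)).restrict
        (p := LinearMap.range (Matrix.toLin' (MSmatF m k c)))
        (q := LinearMap.range (Matrix.toLin' (MSmatF m k c)))
        (fun x _ => LinearMap.mem_range_self _ x))
      ∧
    (∀ μ ∈ spectrum ℂ
        ((-(Matrix.toLin' ((MSmatF m k c).map Complex.ofReal))).restrict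
          (p := LinearMap.range (Matrix.toLin' ((MSmatF m k c).map Complex.ofReal)))
          (q := LinearMap.range (Matrix.toLin' ((MSmatF m k c).map Complex.ofReal)))
          (fun x _ => ⟨-x, by simp [Matrix.mulVec_neg]⟩)),
      μ.im = 0 ∧ δ ≤ μ.re ∧ μ.re < η) := by

  have hcpos : 0 < ∑ i, c i := lt_of_lt_of_le hcmin hmin
  refine ⟨MS_isCompl k c hsymm hkpos hc hcpos,
    MS_bijective k c hsymm hkpos hc hcpos, ?_⟩
  intro μ hμ
  have hEig := Module.End.hasEigenvalue_iff_mem_spectrum.mpr hμ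
  obtain ⟨v, hv⟩ := hEig.exists_hasEigenvector
  have hvx := hv.apply_eq_smul
  set x : Fin (m + 1) → ℂ := (v : Fin (m + 1) → ℂ) with hxdef
  have hx0 : x ≠ 0 := by
    intro h
    apply hv.2
    apply Subtype.coe_injective
    simpa [hxdef] using h
  have heig : ((MSmatF m k c).map Complex.ofRealHom).mulVec x = -(μ • x) := by
    have h1 := congrArg Subtype.val hvx
    replace h1 : (-(Matrix.toLin' ((MSmatF m k c).map Complex.ofReal))) (v : Fin (m + 1) → ℂ)
        = μ • (v : Fin (m + 1) → ℂ) := h1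
    simp only [LinearMap.neg_apply, Matrix.toLin'_apply] at h1
    have h2 : (((MSmatF m k c).map Complex.ofReal).mulVec x) = -(μ • x) := by
      rw [← neg_eq_iff_eq_neg]
      exact h1
    exact h2
  have hsum : ∑ i, x i = 0 := by
    obtain ⟨w, hw⟩ := v.2
    rw [Matrix.toLin'_apply] at hw
    have : x = ((MSmatF m k c).map Complex.ofRealHom).mulVec w := hw.symm
    rw [this]
    exact MS_colsum k c hsymm Complex.ofRealHom w
  have hres := MS_spec k c hm hsymm hkpos hc cmin cmax hcmin hmin hmax δ₀ hδ₀
    μ x hx0 hsum heig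
  rw [hδ, hη]
  exact hres
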